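/- Let W be a constant algebraic Weyl tensor on ℝ^4 and K_{ij}(x) = −(1/3) W_{μijν} x^μ x^ν / |x|^4. Then ΔK_{ij}(x) = (8/3) W_{kijl} x^k x^l / |x|^6 for all x ≠ 0, and consequently Δ²K = 0 on ℝ^4 \ {0}. -/

import Mathlib

/-- A constant 4-tensor on `ℝ⁴` with the algebraic symmetries of the Weyl tensor. -/
def IsWeyl (W : Fin 4 → Fin 4 → Fin 4 → Fin 4 → ℝ) : Prop :=
  (∀ k i j l, W k i j l = - W i k j l) ∧
  (∀ k i j l, W k i j l = - W k i l j) ∧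
  (∀ k i j l, W k i j l = W j l k i) ∧
  (∀ k i j l, W k i j l + W i j k l + W j k i l = 0) ∧
  (∀ i j, (∑ k, W k i j k) = 0)

/-- The Euclidean Laplacian of a function on `ℝ⁴`, componentwise. -/
noncomputable def lap (f : (Fin 4 → ℝ) → ℝ) (x : Fin 4 → ℝ) : ℝ :=
  ∑ k, fderiv ℝ (fun y => fderiv ℝ f y (Pi.single k 1)) x (Pi.single k 1)

/-- For `K_{ij}(x) = -(1/3) W_{μijν} xᵘ xᵛ / |x|⁴` one has
`ΔK_{ij}(x) = (8/3) W_{kijl} xᵏ xˡ / |x|⁶` on `ℝ⁴ \ {0}`, and consequently `Δ²K = 0` there. -/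

noncomputable def pr (m : Fin 4) : (Fin 4 → ℝ) →L[ℝ] ℝ :=
  ContinuousLinearMap.proj m

noncomputable def Sq (y : Fin 4 → ℝ) : ℝ := ∑ m, y m ^ 2

lemma hasPr (m : Fin 4) (x : Fin 4 → ℝ) : HasFDerivAt (fun y : Fin 4 → ℝ => y m) (pr m) x :=
  (pr m).hasFDerivAt

lemma hasS (x : Fin 4 → ℝ) : HasFDerivAt Sq (∑ m, (2 * x m) • pr m) x := by
  have h : ∀ m : Fin 4, HasFDerivAt (fun y : Fin 4 → ℝ => y m ^ 2) ((2 * x m) • pr m) x := by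
    intro m
    have := (hasPr m x).fun_mul (hasPr m x)
    have e1 : (fun y : Fin 4 → ℝ => y m ^ 2) = fun y => y m * y m := by ext y; ring
    rw [e1]
    refine this.congr_fderiv ?_
    module
  exact HasFDerivAt.fun_sum (fun m _ => h m)

lemma pr_single (m k : Fin 4) : pr m (Pi.single k 1) = if m = k then 1 else 0 := by
  simp [pr, Pi.single_apply]

noncomputable def Qf (A : Fin 4 → Fin 4 → ℝ) (y : Fin 4 → ℝ) : ℝ :=
  ∑ μ, ∑ ν, A μ ν * y μ * y ν

lemma hasQ (A : Fin 4 → Fin 4 → ℝ) (x : Fin 4 → ℝ) :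
    HasFDerivAt (Qf A)
      (∑ μ, ∑ ν, ((A μ ν * x μ) • pr ν + (A μ ν * x ν) • pr μ)) x := by
  refine HasFDerivAt.fun_sum fun μ _ => HasFDerivAt.fun_sum fun ν _ => ?_
  have h1 : HasFDerivAt (fun y : Fin 4 → ℝ => A μ ν * y μ) ((A μ ν) • pr μ) x :=
    (hasPr μ x).const_mul (A μ ν)
  have := h1.fun_mul (hasPr ν x)
  refine this.congr_fderiv ?_
  module

lemma hasZ (n : ℤ) {x : Fin 4 → ℝ} (hs : Sq x ≠ 0) :
    HasFDerivAt (fun y => Sq y ^ n)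
      (((n : ℝ) * Sq x ^ (n - 1)) • ∑ m, (2 * x m) • pr m) x :=
  (hasDerivAt_zpow n (Sq x) (Or.inl hs)).comp_hasFDerivAt x (hasS x)

noncomputable def Lf (A : Fin 4 → Fin 4 → ℝ) (k : Fin 4) (y : Fin 4 → ℝ) : ℝ :=
  (∑ ν, A k ν * y ν) + (∑ μ, A μ k * y μ)

lemma fderiv_main (A : Fin 4 → Fin 4 → ℝ) (n : ℤ) {x : Fin 4 → ℝ} (hs : Sq x ≠ 0) (k : Fin 4) :
    fderiv ℝ (fun y => Qf A y * Sq y ^ n) x (Pi.single k 1)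
      = Lf A k x * Sq x ^ n + (n : ℝ) * Qf A x * Sq x ^ (n - 1) * (2 * x k) := by
  have hF := (hasQ A x).fun_mul (hasZ n hs)
  rw [hF.fderiv]
  simp only [ContinuousLinearMap.add_apply, ContinuousLinearMap.smul_apply,
    ContinuousLinearMap.coe_sum', Finset.sum_apply, pr_single, smul_eq_mul,
    mul_ite, mul_one, mul_zero, Finset.sum_ite_eq', Finset.mem_univ, if_true,
    Finset.sum_add_distrib]
  have hsw : ∀ μ, (∑ ν, if μ = k then A μ ν * x ν else 0)
      = if μ = k then ∑ ν, A μ ν * x ν else 0 := fun μ => by split <;> simp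
  simp only [hsw, Finset.sum_ite_eq', Finset.mem_univ, if_true]
  rw [Lf]
  ring

lemma hasLf (A : Fin 4 → Fin 4 → ℝ) (k : Fin 4) (x : Fin 4 → ℝ) :
    HasFDerivAt (Lf A k) (∑ m, (A k m + A m k) • pr m) x := by
  have h : Lf A k = fun y => ∑ m, (A k m + A m k) * y m := by
    funext y; rw [Lf]; simp [add_mul, Finset.sum_add_distrib]
  rw [h]
  exact HasFDerivAt.fun_sum fun m _ => (hasPr m x).const_mul _

lemma fderiv2 (A : Fin 4 → Fin 4 → ℝ) (n : ℤ) {x : Fin 4 → ℝ} (hs : Sq x ≠ 0) (k : Fin 4) :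
    fderiv ℝ (fun y => Lf A k y * Sq y ^ n + (2 * (n : ℝ)) * (Qf A y * Sq y ^ (n - 1) * y k))
        x (Pi.single k 1)
      = (A k k + A k k) * Sq x ^ n + Lf A k x * ((n : ℝ) * Sq x ^ (n - 1) * (2 * x k))
        + (2 * (n : ℝ)) * ((Lf A k x * Sq x ^ (n - 1)
            + Qf A x * (((n - 1 : ℤ) : ℝ) * Sq x ^ (n - 2) * (2 * x k))) * x k
          + Qf A x * Sq x ^ (n - 1)) := by
  have h1 := (hasLf A k x).fun_mul (hasZ n hs)
  have hz1 := hasZ (n - 1) hs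
  rw [show n - 1 - 1 = n - 2 from by ring] at hz1
  have h2 := (((hasQ A x).fun_mul hz1).fun_mul (hasPr k x)).const_mul (2 * (n : ℝ))
  have H := h1.fun_add h2
  rw [H.fderiv]
  simp only [ContinuousLinearMap.add_apply, ContinuousLinearMap.smul_apply,
    ContinuousLinearMap.coe_sum', Finset.sum_apply, pr_single, smul_eq_mul,
    mul_ite, mul_one, mul_zero, Finset.sum_ite_eq', Finset.mem_univ, if_true,
    Finset.sum_add_distrib]
  have hsw : ∀ μ, (∑ ν, if μ = k then A μ ν * x ν else 0)
      = if μ = k then ∑ ν, A μ ν * x ν else 0 := fun μ => by split <;> simp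
  simp only [hsw, Finset.sum_ite_eq', Finset.mem_univ, if_true]
  rw [Lf]
  ring

lemma Sq_pos {y : Fin 4 → ℝ} (hy : y ≠ 0) : 0 < Sq y := by
  rw [Sq]
  have h : ∃ m, y m ≠ 0 := by
    by_contra h
    push_neg at h
    exact hy (funext h)
  obtain ⟨m, hm⟩ := h
  have : (0:ℝ) < y m ^ 2 := by positivity
  exact lt_of_lt_of_le this (Finset.single_le_sum (fun i _ => sq_nonneg (y i)) (Finset.mem_univ m))

lemma Sq_ne {y : Fin 4 → ℝ} (hy : y ≠ 0) : Sq y ≠ 0 := (Sq_pos hy).ne'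

lemma sum_Lf_mul (A : Fin 4 → Fin 4 → ℝ) (x : Fin 4 → ℝ) :
    ∑ k, Lf A k x * x k = 2 * Qf A x := by
  simp only [Lf, Qf, add_mul, Finset.sum_mul, Finset.sum_add_distrib]
  rw [Finset.sum_comm (f := fun k μ => A μ k * x μ * x k)]
  rw [two_mul]
  congr 1 <;>
    (apply Finset.sum_congr rfl; intro k _; apply Finset.sum_congr rfl; intro l _; ring)

lemma lap_QS (A : Fin 4 → Fin 4 → ℝ) (htr : ∑ k, A k k = 0) (n : ℤ)
    {x : Fin 4 → ℝ} (hx : x ≠ 0) :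
    lap (fun y => Qf A y * Sq y ^ n) x
      = (4 * (n:ℝ)^2 + 12 * (n:ℝ)) * Qf A x * Sq x ^ (n - 1) := by
  have hs := Sq_ne hx
  rw [lap]
  have hk : ∀ k : Fin 4,
      fderiv ℝ (fun y => fderiv ℝ (fun y => Qf A y * Sq y ^ n) y (Pi.single k 1)) x (Pi.single k 1)
      = (A k k + A k k) * Sq x ^ n + Lf A k x * ((n : ℝ) * Sq x ^ (n - 1) * (2 * x k))
        + (2 * (n : ℝ)) * ((Lf A k x * Sq x ^ (n - 1)
            + Qf A x * (((n - 1 : ℤ) : ℝ) * Sq x ^ (n - 2) * (2 * x k))) * x k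
          + Qf A x * Sq x ^ (n - 1)) := by
    intro k
    have hev : (fun y => fderiv ℝ (fun y => Qf A y * Sq y ^ n) y (Pi.single k 1))
        =ᶠ[nhds x] (fun y => Lf A k y * Sq y ^ n + (2 * (n : ℝ)) * (Qf A y * Sq y ^ (n - 1) * y k)) := by
      filter_upwards [IsOpen.mem_nhds isOpen_ne hx] with y hy
      rw [fderiv_main A n (Sq_ne hy) k]
      ring
    rw [hev.fderiv_eq, fderiv2 A n hs k]
  simp only [hk]
  have hpow : Sq x ^ (n - 2) * Sq x = Sq x ^ (n - 1) := by
    rw [← zpow_add_one₀ hs, show n - 2 + 1 = n - 1 from by ring]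
  have hsum2 : ∑ k, x k * x k = Sq x := by
    rw [Sq]; apply Finset.sum_congr rfl; intro k _; ring
  have expand : ∀ k : Fin 4,
      (A k k + A k k) * Sq x ^ n + Lf A k x * ((n : ℝ) * Sq x ^ (n - 1) * (2 * x k))
        + (2 * (n : ℝ)) * ((Lf A k x * Sq x ^ (n - 1)
            + Qf A x * (((n - 1 : ℤ) : ℝ) * Sq x ^ (n - 2) * (2 * x k))) * x k
          + Qf A x * Sq x ^ (n - 1))
      = (A k k + A k k) * Sq x ^ n
        + (4 * (n:ℝ)) * Sq x ^ (n - 1) * (Lf A k x * x k)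
        + (4 * (n:ℝ) * ((n:ℝ) - 1)) * Sq x ^ (n - 2) * Qf A x * (x k * x k)
        + (2 * (n:ℝ)) * Qf A x * Sq x ^ (n - 1) := by
    intro k
    push_cast
    ring
  simp only [expand, Finset.sum_add_distrib, ← Finset.mul_sum, ← Finset.sum_mul]
  rw [htr, sum_Lf_mul, hsum2]
  simp only [Fin.sum_const, smul_eq_mul]
  linear_combination (4 * (n:ℝ) * ((n:ℝ) - 1) * Qf A x) * hpow

lemma lap_congr {f g : (Fin 4 → ℝ) → ℝ} (h : ∀ y : Fin 4 → ℝ, y ≠ 0 → f y = g y)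
    {x : Fin 4 → ℝ} (hx : x ≠ 0) : lap f x = lap g x := by
  rw [lap, lap]
  refine Finset.sum_congr rfl fun k _ => ?_
  have hd : ∀ y : Fin 4 → ℝ, y ≠ 0 → fderiv ℝ f y = fderiv ℝ g y := by
    intro y hy
    apply Filter.EventuallyEq.fderiv_eq
    filter_upwards [IsOpen.mem_nhds isOpen_ne hy] with z hz using h z hz
  have hev : (fun y => fderiv ℝ f y (Pi.single k 1)) =ᶠ[nhds x]
      (fun y => fderiv ℝ g y (Pi.single k 1)) := by
    filter_upwards [IsOpen.mem_nhds isOpen_ne hx] with y hy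
    rw [hd y hy]
  rw [hev.fderiv_eq]

theorem stmt_13 (W : Fin 4 → Fin 4 → Fin 4 → Fin 4 → ℝ) (hW : IsWeyl W) (i j : Fin 4) :
    ∀ x : Fin 4 → ℝ, x ≠ 0 →
      (lap (fun y : Fin 4 → ℝ =>
          (-(1/3 : ℝ) * ∑ μ, ∑ ν, W μ i j ν * y μ * y ν) / (∑ m, y m ^ 2) ^ 2) x
        = (8/3 : ℝ) * (∑ k, ∑ l, W k i j l * x k * x l) / (∑ m, x m ^ 2) ^ 3) ∧
      lap (lap (fun y : Fin 4 → ℝ =>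
          (-(1/3 : ℝ) * ∑ μ, ∑ ν, W μ i j ν * y μ * y ν) / (∑ m, y m ^ 2) ^ 2)) x = 0 := by

  intro x hx
  set A1 : Fin 4 → Fin 4 → ℝ := fun μ ν => -(1/3 : ℝ) * W μ i j ν with hA1
  set A2 : Fin 4 → Fin 4 → ℝ := fun μ ν => (-8 : ℝ) * A1 μ ν with hA2
  have htr1 : ∑ k, A1 k k = 0 := by
    simp only [hA1, ← Finset.mul_sum, hW.2.2.2.2 i j, mul_zero]
  have htr2 : ∑ k, A2 k k = 0 := by
    simp only [hA2, ← Finset.mul_sum, htr1, mul_zero]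
  have hzpow : ∀ (t : ℝ) (m : ℕ), t ^ (-(m:ℤ)) = (t ^ m)⁻¹ := by
    intro t m; rw [zpow_neg, zpow_natCast]
  have hfun : (fun y : Fin 4 → ℝ =>
      (-(1/3 : ℝ) * ∑ μ, ∑ ν, W μ i j ν * y μ * y ν) / (∑ m, y m ^ 2) ^ 2)
      = fun y => Qf A1 y * Sq y ^ (-2 : ℤ) := by
    funext y
    rw [Qf, Sq, div_eq_mul_inv, show (-2 : ℤ) = -(2:ℕ) from rfl, hzpow]
    congr 1
    simp [hA1, Finset.mul_sum, mul_assoc]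
  have hQ1 : ∀ y, Qf A1 y = -(1/3 : ℝ) * ∑ μ, ∑ ν, W μ i j ν * y μ * y ν := by
    intro y; rw [Qf]; simp [hA1, Finset.mul_sum, mul_assoc]
  have hQ2 : ∀ y, Qf A2 y = (-8 : ℝ) * Qf A1 y := by
    intro y; rw [Qf, Qf]; simp [hA2, Finset.mul_sum, mul_assoc]
  have hlap1 : ∀ y : Fin 4 → ℝ, y ≠ 0 →
      lap (fun y => Qf A1 y * Sq y ^ (-2 : ℤ)) y = Qf A2 y * Sq y ^ (-3 : ℤ) := by
    intro y hy
    rw [lap_QS A1 htr1 (-2) hy, hQ2]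
    norm_num
  constructor
  · rw [hfun, hlap1 x hx, hQ2, hQ1, Sq, show (-3:ℤ) = -(3:ℕ) from rfl, hzpow]
    have hs : (∑ m, x m ^ 2) ≠ 0 := by rw [← Sq]; exact Sq_ne hx
    field_simp
  · rw [hfun, lap_congr hlap1 hx, lap_QS A2 htr2 (-3) hx]
    norm_num
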